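/- Assume the CFL condition λ L_V ≤ 1, and let (y_i^n) be generated by the periodic explicit Euler FtL scheme. Then the discrete Kružkov entropy inequality holds: for every constant k ∈ ℝ, every n ≥ 0 and every i = 1,…,N−1, |y_i^{n+1} − k| ≤ |y_i^n − k| + λ[q(y_{i+1}^n, k) − q(y_i^n, k)], where q(y,k) = sgn(y − k)(V(y) − V(k)). -/
import Mathlib


/-- `y n i`, `i = 1, …, N-1`, is generated by the periodic explicit Euler
Follow-the-Leader scheme `y_i^{n+1} = y_i^n + λ(V(y_{i+1}^n) − V(y_i^n))`,
with the periodic convention `y_N^n := y_1^n`. -/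
def IsEulerFtL (N : ℕ) (lam : ℝ) (V : ℝ → ℝ) (y : ℕ → ℕ → ℝ) : Prop :=
  (∀ n : ℕ, y n N = y n 1) ∧
  ∀ n : ℕ, ∀ i ∈ Finset.Icc 1 (N - 1),
    y (n + 1) i = y n i + lam * (V (y n (i + 1)) - V (y n i))

/-- Discrete Kružkov entropy inequality for the periodic explicit Euler FtL
scheme: `|y_i^{n+1} − k| ≤ |y_i^n − k| + λ(q(y_{i+1}^n,k) − q(y_i^n,k))` with
`q(y,k) = sgn(y − k)(V(y) − V(k))`. -/
theorem eulerFtL_discrete_entropy_inequality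
    (N : ℕ) (hN : 2 ≤ N) (ℓ Δt : ℝ) (hℓ : 0 < ℓ) (hΔt : 0 < Δt)
    (V : ℝ → ℝ) (LV : NNReal) (hVlip : LipschitzWith LV V) (hVmono : Monotone V)
    (hCFL : Δt / ℓ * (LV : ℝ) ≤ 1)
    (y : ℕ → ℕ → ℝ) (hy : IsEulerFtL N (Δt / ℓ) V y)
    (k : ℝ) :
    ∀ n : ℕ, ∀ i ∈ Finset.Icc 1 (N - 1),
      |y (n + 1) i - k| ≤ |y n i - k| +
        Δt / ℓ * (Real.sign (y n (i + 1) - k) * (V (y n (i + 1)) - V k)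
          - Real.sign (y n i - k) * (V (y n i) - V k)) := by
  intro n i hi
  obtain ⟨hper, hrec⟩ := hy
  set lam := Δt / ℓ with hlamdef
  have hlam0 : 0 ≤ lam := le_of_lt (div_pos hΔt hℓ)
  set a := y n i with ha
  set b := y n (i + 1) with hb
  have hrec' : y (n + 1) i = a + lam * (V b - V a) := hrec n i hi
  -- Lipschitz bound
  have hlip : ∀ x z : ℝ, z ≤ x → V x - V z ≤ (LV : ℝ) * (x - z) := by
    intro x z hzx
    have := hVlip.dist_le_mul x z
    rw [Real.dist_eq, Real.dist_eq] at this
    calc V x - V z ≤ |V x - V z| := le_abs_self _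
      _ ≤ (LV : ℝ) * |x - z| := this
      _ = (LV : ℝ) * (x - z) := by rw [abs_of_nonneg (by linarith)]
  -- monotonicity of the scheme
  have Hmono : ∀ a1 a2 b1 b2 : ℝ, a1 ≤ a2 → b1 ≤ b2 →
      a1 + lam * (V b1 - V a1) ≤ a2 + lam * (V b2 - V a2) := by
    intro a1 a2 b1 b2 ha12 hb12
    have h1 : lam * (V a2 - V a1) ≤ a2 - a1 := by
      calc lam * (V a2 - V a1) ≤ lam * ((LV : ℝ) * (a2 - a1)) := by
            apply mul_le_mul_of_nonneg_left (hlip a2 a1 ha12) hlam0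
        _ = (lam * (LV : ℝ)) * (a2 - a1) := by ring
        _ ≤ 1 * (a2 - a1) := by
            apply mul_le_mul_of_nonneg_right hCFL (by linarith)
        _ = a2 - a1 := one_mul _
    have h2 : lam * V b1 ≤ lam * V b2 :=
      mul_le_mul_of_nonneg_left (hVmono hb12) hlam0
    nlinarith
  set U := (a ⊔ k) + lam * (V (b ⊔ k) - V (a ⊔ k)) with hU
  set Lo := (a ⊓ k) + lam * (V (b ⊓ k) - V (a ⊓ k)) with hLo
  have hyU : y (n + 1) i ≤ U := by
    rw [hrec']; exact Hmono a (a ⊔ k) b (b ⊔ k) le_sup_left le_sup_left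
  have hkU : k ≤ U := by
    have := Hmono k (a ⊔ k) k (b ⊔ k) le_sup_right le_sup_right
    simpa using this
  have hLy : Lo ≤ y (n + 1) i := by
    rw [hrec']; exact Hmono (a ⊓ k) a (b ⊓ k) b inf_le_left inf_le_left
  have hLk : Lo ≤ k := by
    have := Hmono (a ⊓ k) k (b ⊓ k) k inf_le_right inf_le_right
    simpa using this
  have habs : |y (n + 1) i - k| ≤ U - Lo := by
    rw [abs_sub_le_iff]; constructor <;> linarith
  -- identify q with sup/inf differences
  have hq : ∀ x : ℝ, Real.sign (x - k) * (V x - V k) = V (x ⊔ k) - V (x ⊓ k) := by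
    intro x
    rcases lt_trichotomy x k with h | h | h
    · rw [Real.sign_of_neg (by linarith), sup_eq_right.2 h.le, inf_eq_left.2 h.le]; ring
    · simp [h]
    · rw [Real.sign_of_pos (by linarith), sup_eq_left.2 h.le, inf_eq_right.2 h.le]; ring
  have hUL : U - Lo = |a - k| + lam * (Real.sign (b - k) * (V b - V k)
      - Real.sign (a - k) * (V a - V k)) := by
    rw [hq a, hq b, hU, hLo]
    have : a ⊔ k - a ⊓ k = |a - k| := max_sub_min_eq_abs' a k
    linarith [this]
  calc |y (n + 1) i - k| ≤ U - Lo := habs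
    _ = _ := hUL
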